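/- Let A = cone{(3,0,3), (0,1,3), (0,−1,3), (−3,0,−2)} and B = cone{(1,3,0), (1,−3,0), (−3,0,−1)} be proper polyhedral cones in ℝ³ (their intersection A ∩ B is nontrivial). Then there exists an initial point x⁰ ∈ ℝ³ such that the circumcentered-reflection method does not reach A ∩ B in finitely many steps: for every N ∈ ℕ and every finite sequence x₀ = x⁰, x₁, …, x_N in which each x_{k+1} is a circumcenter of x_k with respect to (A, B), one has x_N ∉ A ∩ B. -/

import Mathlib

open RealInnerProductSpace Pointwise

/-- `p` is the metric projection of `x` onto `C`: the point of `C` such that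
`⟪y - p, x - p⟫ ≤ 0` for all `y ∈ C`. -/
def IsProj {E : Type*} [NormedAddCommGroup E] [InnerProductSpace ℝ E]
    (C : Set E) (x p : E) : Prop :=
  p ∈ C ∧ ∀ y ∈ C, ⟪y - p, x - p⟫ ≤ 0

/-- `c` is a circumcenter of `x` with respect to `(A, B)`: writing `R_A x = 2 P_A x - x`
and `R_B (R_A x) = 2 P_B (R_A x) - R_A x`, the point `c` lies in the affine span of
`{x, R_A x, R_B (R_A x)}` and is equidistant from these three points. -/
def IsCircumcenter {E : Type*} [NormedAddCommGroup E] [InnerProductSpace ℝ E]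
    (A B : Set E) (x c : E) : Prop :=
  ∃ pa pb : E, IsProj A x pa ∧ IsProj B ((2 : ℝ) • pa - x) pb ∧
    c ∈ affineSpan ℝ
      ({x, (2 : ℝ) • pa - x, (2 : ℝ) • pb - ((2 : ℝ) • pa - x)} : Set E) ∧
    ‖c - x‖ = ‖c - ((2 : ℝ) • pa - x)‖ ∧
    ‖c - x‖ = ‖c - ((2 : ℝ) • pb - ((2 : ℝ) • pa - x))‖

/-- The point of `ℝ³ = EuclideanSpace ℝ (Fin 3)` with coordinates `(a, b, c)`. -/
noncomputable def vec3 (a b c : ℝ) : EuclideanSpace ℝ (Fin 3) :=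
  (WithLp.equiv 2 (Fin 3 → ℝ)).symm ![a, b, c]


lemma inner_vec3 (a b c d e f : ℝ) : ⟪vec3 a b c, vec3 d e f⟫ = a*d + b*e + c*f := by
  simp [vec3, PiLp.inner_apply, Fin.sum_univ_three, RCLike.inner_apply]
  ring

lemma smul_vec3 (t a b c : ℝ) : t • vec3 a b c = vec3 (t*a) (t*b) (t*c) := by
  ext i; fin_cases i <;> simp [vec3]

lemma sub_vec3 (a b c d e f : ℝ) : vec3 a b c - vec3 d e f = vec3 (a-d) (b-e) (c-f) := by
  ext i; fin_cases i <;> simp [vec3]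

lemma add_vec3 (a b c d e f : ℝ) : vec3 a b c + vec3 d e f = vec3 (a+d) (b+e) (c+f) := by
  ext i; fin_cases i <;> simp [vec3]

lemma vec3_congr {a b c d e f : ℝ} (h1 : a = d) (h2 : b = e) (h3 : c = f) :
    vec3 a b c = vec3 d e f := by rw [h1, h2, h3]

lemma isProj_unique {E : Type*} [NormedAddCommGroup E] [InnerProductSpace ℝ E]
    {C : Set E} {x p q : E} (hp : IsProj C x p) (hq : IsProj C x q) : q = p := by
  have h1 := hp.2 q hq.1
  have h2 := hq.2 p hp.1
  have e1 : ⟪q - p, x - p⟫ - ⟪q - p, x - q⟫ = ⟪q - p, q - p⟫ := by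
    rw [← inner_sub_right]; congr 1; abel
  have e2 : ⟪p - q, x - q⟫ = -⟪q - p, x - q⟫ := by
    rw [← inner_neg_left]; congr 1; abel
  have key : ⟪q - p, q - p⟫ ≤ (0:ℝ) := by
    rw [← e1]; rw [e2] at h2; linarith
  exact sub_eq_zero.mp (real_inner_self_nonpos.mp key)

lemma inner_eq_of_norm_eq {E : Type*} [NormedAddCommGroup E] [InnerProductSpace ℝ E]
    {c P Q : E} (h : ‖c - P‖ = ‖c - Q‖) :
    2 * ⟪c, Q - P⟫ = ‖Q‖^2 - ‖P‖^2 := by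
  have h2 : ‖c - P‖^2 = ‖c - Q‖^2 := by rw [h]
  rw [norm_sub_sq_real, norm_sub_sq_real] at h2
  rw [inner_sub_right]; linarith

lemma norm_eq_of_inner_self_eq {E : Type*} [NormedAddCommGroup E] [InnerProductSpace ℝ E]
    {u w : E} (h : ⟪u, u⟫ = ⟪w, w⟫) : ‖u‖ = ‖w‖ := by
  rw [← Real.sqrt_sq (norm_nonneg u), ← Real.sqrt_sq (norm_nonneg w),
    ← real_inner_self_eq_norm_sq, ← real_inner_self_eq_norm_sq, h]

lemma circum_unique {E : Type*} [NormedAddCommGroup E] [InnerProductSpace ℝ E]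
    {P₀ P₁ P₂ c c' : E} {a b : ℝ}
    (hc : c ∈ affineSpan ℝ ({P₀, P₁, P₂} : Set E))
    (hc' : c' - P₀ = a • (P₁ - P₀) + b • (P₂ - P₀))
    (h1 : ‖c - P₀‖ = ‖c - P₁‖) (h2 : ‖c - P₀‖ = ‖c - P₂‖)
    (h1' : ‖c' - P₀‖ = ‖c' - P₁‖) (h2' : ‖c' - P₀‖ = ‖c' - P₂‖) : c = c' := by
  have hP₀ : P₀ ∈ affineSpan ℝ ({P₀, P₁, P₂} : Set E) := mem_affineSpan ℝ (by simp)
  have hdir : c - P₀ ∈ vectorSpan ℝ ({P₀, P₁, P₂} : Set E) := by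
    have := AffineSubspace.vsub_mem_direction hc hP₀
    rwa [direction_affineSpan] at this
  have hle : vectorSpan ℝ ({P₀, P₁, P₂} : Set E) ≤
      Submodule.span ℝ ({P₁ - P₀, P₂ - P₀} : Set E) := by
    rw [vectorSpan_eq_span_vsub_set_right ℝ (show P₀ ∈ ({P₀, P₁, P₂} : Set E) by simp),
      Submodule.span_le]
    rintro y ⟨p, hp, rfl⟩
    rcases hp with rfl | rfl | rfl
    · simp
    · exact Submodule.subset_span (by simp)
    · exact Submodule.subset_span (by simp)
  obtain ⟨a', b', hab⟩ := Submodule.mem_span_pair.mp (hle hdir)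
  have hd : c - c' = (a' - a) • (P₁ - P₀) + (b' - b) • (P₂ - P₀) := by
    have h' : c - c' = (c - P₀) - (c' - P₀) := by abel
    rw [h', ← hab, hc']
    module
  have hu : ⟪c - c', P₁ - P₀⟫ = 0 := by
    have e1 := inner_eq_of_norm_eq h1
    have e2 := inner_eq_of_norm_eq h1'
    rw [inner_sub_left]; linarith
  have hv : ⟪c - c', P₂ - P₀⟫ = 0 := by
    have e1 := inner_eq_of_norm_eq h2
    have e2 := inner_eq_of_norm_eq h2'
    rw [inner_sub_left]; linarith
  have hz : ⟪c - c', c - c'⟫ = (0:ℝ) := by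
    nth_rewrite 2 [hd]
    rw [inner_add_right, real_inner_smul_right, real_inner_smul_right, hu, hv]
    ring
  exact sub_eq_zero.mp (inner_self_eq_zero.mp hz)

section cones
variable {A B : Set (EuclideanSpace ℝ (Fin 3))}
variable (hA : A = {x : EuclideanSpace ℝ (Fin 3) | ∃ α : Fin 4 → ℝ, (∀ i, 0 ≤ α i) ∧
      x = ∑ i, α i •
        ![vec3 3 0 3, vec3 0 1 3, vec3 0 (-1) 3, vec3 (-3) 0 (-2)] i})
variable (hB : B = {x : EuclideanSpace ℝ (Fin 3) | ∃ β : Fin 3 → ℝ, (∀ i, 0 ≤ β i) ∧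
      x = ∑ i, β i • ![vec3 1 3 0, vec3 1 (-3) 0, vec3 (-3) 0 (-1)] i})

include hA in
lemma memA (c0 c1 c2 c3 : ℝ) (h0 : 0 ≤ c0) (h1 : 0 ≤ c1) (h2 : 0 ≤ c2) (h3 : 0 ≤ c3) :
    vec3 (3*c0 - 3*c3) (c1 - c2) (3*c0 + 3*c1 + 3*c2 - 2*c3) ∈ A := by
  rw [hA]
  refine ⟨![c0, c1, c2, c3], fun i => by fin_cases i <;> assumption, ?_⟩
  rw [Fin.sum_univ_four]
  simp only [Matrix.cons_val_zero, Matrix.cons_val_one, Matrix.head_cons,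
    Matrix.cons_val_two, Matrix.tail_cons, Matrix.cons_val_three]
  rw [smul_vec3, smul_vec3, smul_vec3, smul_vec3, add_vec3, add_vec3, add_vec3]
  exact vec3_congr (by ring) (by ring) (by ring)

include hB in
lemma memB (c0 c1 c2 : ℝ) (h0 : 0 ≤ c0) (h1 : 0 ≤ c1) (h2 : 0 ≤ c2) :
    vec3 (c0 + c1 - 3*c2) (3*c0 - 3*c1) (-c2) ∈ B := by
  rw [hB]
  refine ⟨![c0, c1, c2], fun i => by fin_cases i <;> assumption, ?_⟩
  rw [Fin.sum_univ_three]
  simp only [Matrix.cons_val_zero, Matrix.cons_val_one, Matrix.head_cons,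
    Matrix.cons_val_two, Matrix.tail_cons]
  rw [smul_vec3, smul_vec3, smul_vec3, add_vec3, add_vec3]
  exact vec3_congr (by ring) (by ring) (by ring)

include hA in
lemma isProjA {x p : EuclideanSpace ℝ (Fin 3)} (hp : p ∈ A) (h0 : ⟪p, x - p⟫ = 0)
    (h1 : ⟪vec3 3 0 3, x - p⟫ ≤ 0) (h2 : ⟪vec3 0 1 3, x - p⟫ ≤ 0)
    (h3 : ⟪vec3 0 (-1) 3, x - p⟫ ≤ 0) (h4 : ⟪vec3 (-3) 0 (-2), x - p⟫ ≤ 0) :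
    IsProj A x p := by
  refine ⟨hp, ?_⟩
  intro y hy
  rw [hA] at hy
  obtain ⟨α, hα, rfl⟩ := hy
  rw [inner_sub_left, h0, sub_zero, Fin.sum_univ_four]
  simp only [Matrix.cons_val_zero, Matrix.cons_val_one, Matrix.head_cons,
    Matrix.cons_val_two, Matrix.tail_cons, Matrix.cons_val_three]
  rw [inner_add_left, inner_add_left, inner_add_left, real_inner_smul_left,
    real_inner_smul_left, real_inner_smul_left, real_inner_smul_left]
  have g0 := mul_nonpos_of_nonneg_of_nonpos (hα 0) h1
  have g1 := mul_nonpos_of_nonneg_of_nonpos (hα 1) h2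
  have g2 := mul_nonpos_of_nonneg_of_nonpos (hα 2) h3
  have g3 := mul_nonpos_of_nonneg_of_nonpos (hα 3) h4
  linarith

include hB in
lemma isProjB {x p : EuclideanSpace ℝ (Fin 3)} (hp : p ∈ B) (h0 : ⟪p, x - p⟫ = 0)
    (h1 : ⟪vec3 1 3 0, x - p⟫ ≤ 0) (h2 : ⟪vec3 1 (-3) 0, x - p⟫ ≤ 0)
    (h3 : ⟪vec3 (-3) 0 (-1), x - p⟫ ≤ 0) :
    IsProj B x p := by
  refine ⟨hp, ?_⟩
  intro y hy
  rw [hB] at hy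
  obtain ⟨β, hβ, rfl⟩ := hy
  rw [inner_sub_left, h0, sub_zero, Fin.sum_univ_three]
  simp only [Matrix.cons_val_zero, Matrix.cons_val_one, Matrix.head_cons,
    Matrix.cons_val_two, Matrix.tail_cons]
  rw [inner_add_left, inner_add_left, real_inner_smul_left,
    real_inner_smul_left, real_inner_smul_left]
  have g0 := mul_nonpos_of_nonneg_of_nonpos (hβ 0) h1
  have g1 := mul_nonpos_of_nonneg_of_nonpos (hβ 1) h2
  have g2 := mul_nonpos_of_nonneg_of_nonpos (hβ 2) h3
  linarith

include hA hB in
lemma stepv (t : ℝ) (ht : 0 < t) (c : EuclideanSpace ℝ (Fin 3))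
    (h : IsCircumcenter A B (t • vec3 4 (-3) 0) c) :
    c = (270*t/17281) • vec3 114 62 21 := by
  obtain ⟨pa, pb, hpa, hpb, hsp, he1, he2⟩ := h
  -- determine pa
  have hpamem : t • vec3 2 0 2 ∈ A := by
    have hm := memA hA (2*t/3) 0 0 0 (by linarith) le_rfl le_rfl le_rfl
    have : t • vec3 2 0 2 = vec3 (3*(2*t/3) - 3*0) (0 - 0) (3*(2*t/3) + 3*0 + 3*0 - 2*0) := by
      rw [smul_vec3]; exact vec3_congr (by ring) (by ring) (by ring)
    rwa [this]
  have hdA : t • vec3 4 (-3) 0 - t • vec3 2 0 2 = t • vec3 2 (-3) (-2) := by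
    rw [smul_vec3, smul_vec3, smul_vec3, sub_vec3]
    exact vec3_congr (by ring) (by ring) (by ring)
  have hpa0 : IsProj A (t • vec3 4 (-3) 0) (t • vec3 2 0 2) := by
    refine isProjA hA hpamem ?_ ?_ ?_ ?_ ?_ <;>
      rw [hdA] <;> rw [real_inner_smul_right] <;>
      first
        | (rw [real_inner_smul_left, inner_vec3]; nlinarith [ht.le])
        | (rw [inner_vec3]; nlinarith [ht.le])
  have hpaeq : pa = t • vec3 2 0 2 := isProj_unique hpa0 hpa
  rw [hpaeq] at hpb hsp he1 he2
  have e1 : (2:ℝ) • (t • vec3 2 0 2) - t • vec3 4 (-3) 0 = t • vec3 0 3 4 := by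
    rw [smul_smul, smul_vec3, smul_vec3, smul_vec3, sub_vec3]
    exact vec3_congr (by ring) (by ring) (by ring)
  rw [e1] at hpb hsp he1 he2
  -- determine pb
  have hpbmem : t • vec3 (9/10) (27/10) 0 ∈ B := by
    have hm := memB hB (9*t/10) 0 0 (by linarith) le_rfl le_rfl
    have : t • vec3 (9/10) (27/10) 0 = vec3 (9*t/10 + 0 - 3*0) (3*(9*t/10) - 3*0) (-0) := by
      rw [smul_vec3]; exact vec3_congr (by ring) (by ring) (by ring)
    rwa [this]
  have hdB : t • vec3 0 3 4 - t • vec3 (9/10) (27/10) 0 = t • vec3 (-9/10) (3/10) 4 := by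
    rw [smul_vec3, smul_vec3, smul_vec3, sub_vec3]
    exact vec3_congr (by ring) (by ring) (by ring)
  have hpb0 : IsProj B (t • vec3 0 3 4) (t • vec3 (9/10) (27/10) 0) := by
    refine isProjB hB hpbmem ?_ ?_ ?_ ?_ <;>
      rw [hdB] <;> rw [real_inner_smul_right] <;>
      first
        | (rw [real_inner_smul_left, inner_vec3]; nlinarith [ht.le])
        | (rw [inner_vec3]; nlinarith [ht.le])
  have hpbeq : pb = t • vec3 (9/10) (27/10) 0 := isProj_unique hpb0 hpb
  rw [hpbeq] at hsp he2
  have e2 : (2:ℝ) • (t • vec3 (9/10) (27/10) 0) - t • vec3 0 3 4 = t • vec3 (9/5) (12/5) (-4) := by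
    rw [smul_smul, smul_vec3, smul_vec3, smul_vec3, sub_vec3]
    exact vec3_congr (by ring) (by ring) (by ring)
  rw [e2] at hsp he2
  -- circumcenter determination
  have hcc : c = t • vec3 (30780/17281) (16740/17281) (5670/17281) := by
    refine circum_unique (a := 13375/34562) (b := 5270/17281) hsp ?_ he1 he2 ?_ ?_
    · rw [smul_vec3, smul_vec3, smul_vec3, smul_vec3, sub_vec3, sub_vec3, sub_vec3,
        smul_vec3, smul_vec3, add_vec3]
      exact vec3_congr (by ring) (by ring) (by ring)
    · refine norm_eq_of_inner_self_eq ?_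
      rw [smul_vec3, smul_vec3, smul_vec3, sub_vec3, sub_vec3, inner_vec3, inner_vec3]
      ring
    · refine norm_eq_of_inner_self_eq ?_
      rw [smul_vec3, smul_vec3, smul_vec3, sub_vec3, sub_vec3, inner_vec3, inner_vec3]
      ring
  rw [hcc, smul_vec3, smul_vec3]
  exact vec3_congr (by ring) (by ring) (by ring)
include hA hB in
lemma stepw (s : ℝ) (hs : 0 < s) (c : EuclideanSpace ℝ (Fin 3))
    (h : IsCircumcenter A B (s • vec3 114 62 21) c) :
    c = (54*s/5) • vec3 4 (-3) 0 := by
  obtain ⟨pa, pb, hpa, hpb, hsp, he1, he2⟩ := h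
  have hpamem : s • vec3 (135/2) 0 (135/2) ∈ A := by
    have hm := memA hA (45*s/2) 0 0 0 (by linarith) le_rfl le_rfl le_rfl
    have : s • vec3 (135/2) 0 (135/2)
        = vec3 (3*(45*s/2) - 3*0) (0 - 0) (3*(45*s/2) + 3*0 + 3*0 - 2*0) := by
      rw [smul_vec3]; exact vec3_congr (by ring) (by ring) (by ring)
    rwa [this]
  have hdA : s • vec3 114 62 21 - s • vec3 (135/2) 0 (135/2) = s • vec3 (93/2) 62 (-93/2) := by
    rw [smul_vec3, smul_vec3, smul_vec3, sub_vec3]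
    exact vec3_congr (by ring) (by ring) (by ring)
  have hpa0 : IsProj A (s • vec3 114 62 21) (s • vec3 (135/2) 0 (135/2)) := by
    refine isProjA hA hpamem ?_ ?_ ?_ ?_ ?_ <;>
      rw [hdA] <;> rw [real_inner_smul_right] <;>
      first
        | (rw [real_inner_smul_left, inner_vec3]; nlinarith [hs.le])
        | (rw [inner_vec3]; nlinarith [hs.le])
  have hpaeq : pa = s • vec3 (135/2) 0 (135/2) := isProj_unique hpa0 hpa
  rw [hpaeq] at hpb hsp he1 he2
  have e1 : (2:ℝ) • (s • vec3 (135/2) 0 (135/2)) - s • vec3 114 62 21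
      = s • vec3 21 (-62) 114 := by
    rw [smul_smul, smul_vec3, smul_vec3, smul_vec3, sub_vec3]
    exact vec3_congr (by ring) (by ring) (by ring)
  rw [e1] at hpb hsp he1 he2
  have hpbmem : s • vec3 21 (-62) 0 ∈ B := by
    have hm := memB hB (s/6) (125*s/6) 0 (by linarith) (by linarith) le_rfl
    have : s • vec3 21 (-62) 0 = vec3 (s/6 + 125*s/6 - 3*0) (3*(s/6) - 3*(125*s/6)) (-0) := by
      rw [smul_vec3]; exact vec3_congr (by ring) (by ring) (by ring)
    rwa [this]
  have hdB : s • vec3 21 (-62) 114 - s • vec3 21 (-62) 0 = s • vec3 0 0 114 := by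
    rw [smul_vec3, smul_vec3, smul_vec3, sub_vec3]
    exact vec3_congr (by ring) (by ring) (by ring)
  have hpb0 : IsProj B (s • vec3 21 (-62) 114) (s • vec3 21 (-62) 0) := by
    refine isProjB hB hpbmem ?_ ?_ ?_ ?_ <;>
      rw [hdB] <;> rw [real_inner_smul_right] <;>
      first
        | (rw [real_inner_smul_left, inner_vec3]; nlinarith [hs.le])
        | (rw [inner_vec3]; nlinarith [hs.le])
  have hpbeq : pb = s • vec3 21 (-62) 0 := isProj_unique hpb0 hpb
  rw [hpbeq] at hsp he2
  have e2 : (2:ℝ) • (s • vec3 21 (-62) 0) - s • vec3 21 (-62) 114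
      = s • vec3 21 (-62) (-114) := by
    rw [smul_smul, smul_vec3, smul_vec3, smul_vec3, sub_vec3]
    exact vec3_congr (by ring) (by ring) (by ring)
  rw [e2] at hsp he2
  have hcc : c = s • vec3 (216/5) (-162/5) 0 := by
    refine circum_unique (a := 845/2356) (b := 153/380) hsp ?_ he1 he2 ?_ ?_
    · rw [smul_vec3, smul_vec3, smul_vec3, smul_vec3, sub_vec3, sub_vec3, sub_vec3,
        smul_vec3, smul_vec3, add_vec3]
      exact vec3_congr (by ring) (by ring) (by ring)
    · refine norm_eq_of_inner_self_eq ?_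
      rw [smul_vec3, smul_vec3, smul_vec3, sub_vec3, sub_vec3, inner_vec3, inner_vec3]
      ring
    · refine norm_eq_of_inner_self_eq ?_
      rw [smul_vec3, smul_vec3, smul_vec3, sub_vec3, sub_vec3, inner_vec3, inner_vec3]
      ring
  rw [hcc, smul_vec3, smul_vec3]
  exact vec3_congr (by ring) (by ring) (by ring)

include hA in
lemma notinA (r : ℝ) (hr : 0 < r) : r • vec3 4 (-3) 0 ∉ A := by
  rw [hA]
  rintro ⟨α, hα, heq⟩
  have h := congrArg (fun z => ⟪z, vec3 1 (-1) (-1)⟫) heq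
  rw [Fin.sum_univ_four] at h
  simp only [Matrix.cons_val_zero, Matrix.cons_val_one, Matrix.head_cons,
    Matrix.cons_val_two, Matrix.tail_cons, Matrix.cons_val_three] at h
  rw [real_inner_smul_left, inner_add_left, inner_add_left, inner_add_left,
    real_inner_smul_left, real_inner_smul_left, real_inner_smul_left,
    real_inner_smul_left, inner_vec3, inner_vec3, inner_vec3, inner_vec3, inner_vec3] at h
  have h0 := hα 0; have h1 := hα 1; have h2 := hα 2; have h3 := hα 3
  nlinarith

include hB in
lemma notinB (r : ℝ) (hr : 0 < r) : r • vec3 114 62 21 ∉ B := by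
  rw [hB]
  rintro ⟨β, hβ, heq⟩
  have h := congrArg (fun z => ⟪z, vec3 0 0 1⟫) heq
  rw [Fin.sum_univ_three] at h
  simp only [Matrix.cons_val_zero, Matrix.cons_val_one, Matrix.head_cons,
    Matrix.cons_val_two, Matrix.tail_cons] at h
  rw [real_inner_smul_left, inner_add_left, inner_add_left,
    real_inner_smul_left, real_inner_smul_left, real_inner_smul_left,
    inner_vec3, inner_vec3, inner_vec3, inner_vec3] at h
  have h0 := hβ 0; have h1 := hβ 1; have h2 := hβ 2
  nlinarith

end cones

/-- Let `A = cone{(3,0,3), (0,1,3), (0,−1,3), (−3,0,−2)}` and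
`B = cone{(1,3,0), (1,−3,0), (−3,0,−1)}` in `ℝ³`. Then there is an initial point `x⁰` such
that the circumcentered-reflection method does not reach `A ∩ B` in finitely many steps:
every finite CRM iteration sequence started at `x⁰` ends outside `A ∩ B`. -/
theorem crm_concrete_cones_R3_no_finite_convergence
    (A B : Set (EuclideanSpace ℝ (Fin 3)))
    (hA : A = {x : EuclideanSpace ℝ (Fin 3) | ∃ α : Fin 4 → ℝ, (∀ i, 0 ≤ α i) ∧
      x = ∑ i, α i •
        ![vec3 3 0 3, vec3 0 1 3, vec3 0 (-1) 3, vec3 (-3) 0 (-2)] i})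
    (hB : B = {x : EuclideanSpace ℝ (Fin 3) | ∃ β : Fin 3 → ℝ, (∀ i, 0 ≤ β i) ∧
      x = ∑ i, β i • ![vec3 1 3 0, vec3 1 (-3) 0, vec3 (-3) 0 (-1)] i}) :
    ∃ x₀ : EuclideanSpace ℝ (Fin 3), ∀ (N : ℕ) (x : ℕ → EuclideanSpace ℝ (Fin 3)),
      x 0 = x₀ → (∀ k < N, IsCircumcenter A B (x k) (x (k + 1))) → x N ∉ A ∩ B := by
  refine ⟨vec3 4 (-3) 0, ?_⟩
  intro N x hx0 hstep
  have key : ∀ k, k ≤ N →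
      (∃ m, k = 2*m ∧ x k = ((2916/17281:ℝ)^m) • vec3 4 (-3) 0) ∨
      (∃ m, k = 2*m+1 ∧ x k = ((270/17281) * (2916/17281:ℝ)^m) • vec3 114 62 21) := by
    intro k
    induction k with
    | zero =>
      intro _
      exact Or.inl ⟨0, rfl, by rw [hx0, pow_zero, one_smul]⟩
    | succ k ih =>
      intro hk1
      have hk : k ≤ N := Nat.le_of_succ_le hk1
      have hcir := hstep k (Nat.lt_of_succ_le hk1)
      rcases ih hk with ⟨m, hkm, hx⟩ | ⟨m, hkm, hx⟩
      · right
        refine ⟨m, by omega, ?_⟩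
        rw [hx] at hcir
        have hres := stepv hA hB _ (pow_pos (by norm_num) m) _ hcir
        rw [hres]; congr 1; ring
      · left
        refine ⟨m+1, by omega, ?_⟩
        rw [hx] at hcir
        have hpos : (0:ℝ) < (270/17281) * (2916/17281:ℝ)^m :=
          mul_pos (by norm_num) (pow_pos (by norm_num) m)
        have hres := stepw hA hB _ hpos _ hcir
        rw [hres]; congr 1; rw [pow_succ]; ring
  rcases key N le_rfl with ⟨m, _, hx⟩ | ⟨m, _, hx⟩
  · rw [hx]
    intro hmem
    exact notinA hA _ (pow_pos (by norm_num) m) hmem.1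
  · rw [hx]
    intro hmem
    exact notinB hB _ (mul_pos (by norm_num) (pow_pos (by norm_num) m)) hmem.2
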